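/- If the base group G₀ is solvable, then the ascending HNN extension H = HNNExtension G₀ ⊤ ψ.range φ is solvable. -/

import Mathlib

open Subgroup HNNExtension
open scoped commutatorElement

section aux

variable {H : Type*} [Group H]

/-- commutator of a directed sup -/
lemma commutator_iSup_le_of_monotone (f : ℕ → Subgroup H) (hf : Monotone f) :
    ⁅⨆ n, f n, ⨆ n, f n⁆ ≤ ⨆ n, ⁅f n, f n⁆ := by
  rw [Subgroup.commutator_le]
  intro g₁ h₁ g₂ h₂
  obtain ⟨i, hi⟩ := (Subgroup.mem_iSup_of_directed hf.directed_le).1 h₁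
  obtain ⟨j, hj⟩ := (Subgroup.mem_iSup_of_directed hf.directed_le).1 h₂
  exact le_iSup (fun n => ⁅f n, f n⁆) (max i j)
    (Subgroup.commutator_mem_commutator (hf (le_max_left i j) hi) (hf (le_max_right i j) hj))

/-- iterated commutator of a directed sup -/
lemma iterate_commutator_iSup_le (f : ℕ → Subgroup H) (hf : Monotone f) (m : ℕ) :
    (fun A : Subgroup H => ⁅A, A⁆)^[m] (⨆ n, f n) ≤
      ⨆ n, (fun A : Subgroup H => ⁅A, A⁆)^[m] (f n) := by
  induction m with
  | zero => simp
  | succ m ih =>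
    set F := fun A : Subgroup H => ⁅A, A⁆ with hF
    have hFmono : Monotone F := fun A B h => Subgroup.commutator_mono h h
    have hmono : Monotone fun n => F^[m] (f n) := fun i j h => hFmono.iterate m (hf h)
    calc F^[m+1] (⨆ n, f n) = F (F^[m] (⨆ n, f n)) := Function.iterate_succ_apply' F m _
      _ ≤ F (⨆ n, F^[m] (f n)) := hFmono ih
      _ ≤ ⨆ n, F (F^[m] (f n)) := commutator_iSup_le_of_monotone _ hmono
      _ = ⨆ n, F^[m+1] (f n) := by
          simp only [Function.iterate_succ_apply' F m]

lemma iterate_commutator_map {G : Type*} [Group G] (f : G →* H) (A : Subgroup G) (m : ℕ) :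
    (fun A : Subgroup H => ⁅A, A⁆)^[m] (A.map f) =
      ((fun A : Subgroup G => ⁅A, A⁆)^[m] A).map f := by
  induction m with
  | zero => simp
  | succ m ih => simp [Function.iterate_succ_apply', ih, Subgroup.map_commutator]

lemma derivedSeries_eq_iterate (G : Type*) [Group G] (m : ℕ) :
    derivedSeries G m = (fun A : Subgroup G => ⁅A, A⁆)^[m] ⊤ := by
  induction m with
  | zero => rfl
  | succ m ih => rw [derivedSeries_succ, ih, Function.iterate_succ_apply']

end aux

/-- If the base group `G₀` is solvable then the ascending HNN extension of `G₀`
along an injective endomorphism `ψ` is solvable. -/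
theorem ascending_hnn_solvable {G₀ : Type*} [Group G₀]
    (ψ : G₀ →* G₀) (hψ : Function.Injective ψ) [Group.IsSolvable G₀] :
    Group.IsSolvable (HNNExtension G₀ ⊤ ψ.range (Subgroup.topEquiv.trans (MonoidHom.ofInjective hψ))) := by
  set φ := Subgroup.topEquiv.trans (MonoidHom.ofInjective hψ) with hφ
  set H := HNNExtension G₀ ⊤ ψ.range φ with hH
  -- the defining relation
  have key : ∀ g : G₀, (t : H) * of g * t⁻¹ = of (ψ g) := by
    intro g
    have := HNNExtension.equiv_eq_conj (φ := φ) (⟨g, Subgroup.mem_top g⟩ : (⊤ : Subgroup G₀))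
    exact this.symm
  -- the increasing family of conjugates of the base group
  set c : ℕ → H := fun n => (t : H)⁻¹ ^ n with hc
  set φn : ℕ → (G₀ →* H) := fun n => (MulAut.conj (c n)).toMonoidHom.comp of with hφn
  set K : ℕ → Subgroup H := fun n => (φn n).range with hK
  have hφn_apply : ∀ n g, φn n g = c n * of g * (c n)⁻¹ := fun n g => rfl
  have hKmono : Monotone K := by
    apply monotone_nat_of_le_succ
    intro n x hx
    obtain ⟨g, rfl⟩ := hx
    refine ⟨ψ g, ?_⟩
    rw [hφn_apply, hφn_apply, ← key g]
    simp only [hc, pow_succ, mul_inv_rev, inv_pow, inv_inv]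
    group
  set N : Subgroup H := ⨆ n, K n with hN
  have hmemN : ∀ n x, x ∈ K n → x ∈ N := fun n x hx => le_iSup K n hx
  have hof0 : ∀ g : G₀, of g ∈ K 0 := fun g => ⟨g, by simp [hφn_apply, hc]⟩
  have hofN : ∀ g : G₀, of g ∈ N := fun g => hmemN 0 _ (hof0 g)
  -- N is normal
  have hconj : ∀ h : H, (∀ x ∈ N, h * x * h⁻¹ ∈ N) ∧ (∀ x ∈ N, h⁻¹ * x * h ∈ N) := by
    intro h
    induction h using HNNExtension.induction_on with
    | of g =>
      constructor <;> intro x hx <;>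
        obtain ⟨n, hn⟩ := (Subgroup.mem_iSup_of_directed hKmono.directed_le).1 hx
      · exact hmemN n _ (mul_mem (mul_mem (hKmono (Nat.zero_le n) (hof0 g)) hn)
          (inv_mem (hKmono (Nat.zero_le n) (hof0 g))))
      · exact hmemN n _ (mul_mem (mul_mem (inv_mem (hKmono (Nat.zero_le n) (hof0 g))) hn)
          (hKmono (Nat.zero_le n) (hof0 g)))
    | t =>
      constructor <;> intro x hx <;>
        obtain ⟨n, hn⟩ := (Subgroup.mem_iSup_of_directed hKmono.directed_le).1 hx <;>
        obtain ⟨g, rfl⟩ := hn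
      · -- t * (c n * of g * (c n)⁻¹) * t⁻¹ ∈ N
        cases n with
        | zero =>
          refine hmemN 0 _ ⟨ψ g, ?_⟩
          rw [hφn_apply, hφn_apply, ← key g]
          simp [hc]
        | succ n =>
          refine hmemN n _ ⟨g, ?_⟩
          rw [hφn_apply, hφn_apply]
          simp only [hc, pow_succ, mul_inv_rev, inv_pow, inv_inv]
          group
      · refine hmemN (n+1) _ ⟨g, ?_⟩
        rw [hφn_apply, hφn_apply]
        simp only [hc, pow_succ, mul_inv_rev, inv_pow, inv_inv]
        group
    | mul a b ha hb =>
      refine ⟨fun x hx => ?_, fun x hx => ?_⟩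
      · have := ha.1 _ (hb.1 x hx)
        simpa [mul_assoc] using this
      · have := hb.2 _ (ha.2 x hx)
        simpa [mul_assoc] using this
    | inv a ha =>
      exact ⟨fun x hx => by convert ha.2 x hx using 3; exact inv_inv a, fun x hx => by convert ha.1 x hx using 3; exact inv_inv a⟩
  have hNnormal : N.Normal := ⟨fun x hx h => (hconj h).1 x hx⟩
  -- the quotient is cyclic, generated by the image of t
  have hcomm : ∀ a b : H, ⁅a, b⁆ ∈ N := by
    have hz : ∀ a : H, (a : H ⧸ N) ∈ Subgroup.zpowers ((t : H) : H ⧸ N) := by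
      intro a
      induction a using HNNExtension.induction_on with
      | of g =>
        have : ((of g : H) : H ⧸ N) = 1 := (QuotientGroup.eq_one_iff _).2 (hofN g)
        rw [this]; exact one_mem _
      | t => exact Subgroup.mem_zpowers _
      | mul a b ha hb => rw [QuotientGroup.mk_mul]; exact mul_mem ha hb
      | inv a ha => rw [QuotientGroup.mk_inv]; exact inv_mem ha
    intro a b
    rw [← QuotientGroup.eq_one_iff]
    obtain ⟨m, hm⟩ := hz a
    obtain ⟨k, hk⟩ := hz b
    have : ((⁅a, b⁆ : H) : H ⧸ N) = ⁅((a : H) : H ⧸ N), ((b : H) : H ⧸ N)⁆ := rfl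
    rw [this, ← hm, ← hk, commutatorElement_def]
    have hcom : Commute (((t : H) : H ⧸ N) ^ m) (((t : H) : H ⧸ N) ^ k) :=
      Commute.zpow_zpow_self _ m k
    group
  -- derived series computation
  obtain ⟨d, hd⟩ := Group.IsSolvable.solvable (G := G₀)
  refine ⟨⟨d + 1, le_bot_iff.1 ?_⟩⟩
  show derivedSeries H (d + 1) ≤ ⊥
  have hKd : ∀ n, (fun A : Subgroup H => ⁅A, A⁆)^[d] (K n) = ⊥ := by
    intro n
    have : K n = Subgroup.map (φn n) ⊤ := by
      rw [← MonoidHom.range_eq_map]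
    rw [this, iterate_commutator_map, ← derivedSeries_eq_iterate, hd]
    simp
  have h1 : derivedSeries H 1 ≤ N := by
    rw [derivedSeries_succ, Subgroup.commutator_le]
    intro a _ b _
    exact hcomm a b
  calc derivedSeries H (d + 1)
      = (fun A : Subgroup H => ⁅A, A⁆)^[d] (derivedSeries H 1) := by
        rw [derivedSeries_eq_iterate, derivedSeries_eq_iterate, Function.iterate_succ_apply]
        rfl
    _ ≤ (fun A : Subgroup H => ⁅A, A⁆)^[d] N := by
        have hFmono : Monotone (fun A : Subgroup H => ⁅A, A⁆) :=
          fun A B h => Subgroup.commutator_mono h h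
        exact hFmono.iterate d h1
    _ ≤ ⨆ n, (fun A : Subgroup H => ⁅A, A⁆)^[d] (K n) := iterate_commutator_iSup_le K hKmono d
    _ = ⊥ := by simp [hKd]
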